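/- There exists a finite simple graph E that is triangle-free and admits a proper 3-coloring, together with two distinct non-adjacent vertices p and q of E, such that every proper 3-coloring c of E satisfies c(p) = c(q). -/
import Mathlib

set_option maxRecDepth 100000
set_option synthInstance.maxSize 2000
set_option synthInstance.maxHeartbeats 1000000
namespace EqGadget

def edges : List (Fin 11 × Fin 11) :=
  [(1,2),(2,3),(3,4),(4,0),
   (5,1),(5,4),(6,2),(6,0),(7,3),(7,1),(8,4),(8,2),(9,0),(9,3),
   (10,5),(10,6),(10,7),(10,8),(10,9)]

def E : SimpleGraph (Fin 11) := SimpleGraph.fromRel (fun a b => (a,b) ∈ edges)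

instance : DecidableRel E.Adj := fun a b =>
  decidable_of_iff (a ≠ b ∧ ((a,b) ∈ edges ∨ (b,a) ∈ edges)) (by rw [E, SimpleGraph.fromRel_adj])

lemma mem_adj : ∀ e ∈ edges, E.Adj e.1 e.2 := by decide

lemma tri : ∀ a b c : Fin 11, E.Adj a b → E.Adj a c → E.Adj b c → False := by decide

lemma cf : E.CliqueFree 3 := by
  intro t ht
  obtain ⟨a, b, c, hab, hac, hbc, rfl⟩ := Finset.card_eq_three.mp ht.2
  have h := ht.1
  exact tri a b c (h (by simp) (by simp) hab) (h (by simp) (by simp) hac)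
    (h (by simp) (by simp) hbc)

/-- On a cycle edge `(i,j)` with twins `ti, tj`, the recolored values differ. -/
lemma recolor_ne : ∀ ci cj cti ctj h : Fin 3, ci ≠ cj → cti ≠ h → ctj ≠ h →
    cti ≠ cj → ctj ≠ ci →
    (if ci = h then cti else ci) ≠ (if cj = h then ctj else cj) := by decide

lemma recolor_ne_hub : ∀ ci cti h : Fin 3, cti ≠ h →
    (if ci = h then cti else ci) ≠ h := by decide

lemma no_odd : ∀ d0 d1 d2 d3 d4 h : Fin 3, d0 ≠ h → d1 ≠ h → d2 ≠ h → d3 ≠ h → d4 ≠ h →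
    d0 ≠ d1 → d1 ≠ d2 → d2 ≠ d3 → d3 ≠ d4 → d4 ≠ d0 → False := by decide

lemma key (c : E.Coloring (Fin 3)) : c 0 = c 1 := by
  by_contra hne
  have v : ∀ e ∈ edges, c e.1 ≠ c e.2 := fun e he => c.valid (mem_adj e he)
  -- hub color
  set h := c 10 with hh
  -- twin-of-hub constraints
  have t0 : c 5 ≠ h := fun e => v (10,5) (by decide) e.symm
  have t1 : c 6 ≠ h := fun e => v (10,6) (by decide) e.symm
  have t2 : c 7 ≠ h := fun e => v (10,7) (by decide) e.symm
  have t3 : c 8 ≠ h := fun e => v (10,8) (by decide) e.symm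
  have t4 : c 9 ≠ h := fun e => v (10,9) (by decide) e.symm
  -- recolored outer cycle
  have d01 := recolor_ne (c 0) (c 1) (c 5) (c 6) h hne t0 t1
    (v (5,1) (by decide)) (v (6,0) (by decide))
  have d12 := recolor_ne (c 1) (c 2) (c 6) (c 7) h (v (1,2) (by decide)) t1 t2
    (v (6,2) (by decide)) (v (7,1) (by decide))
  have d23 := recolor_ne (c 2) (c 3) (c 7) (c 8) h (v (2,3) (by decide)) t2 t3
    (v (7,3) (by decide)) (v (8,2) (by decide))
  have d34 := recolor_ne (c 3) (c 4) (c 8) (c 9) h (v (3,4) (by decide)) t3 t4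
    (v (8,4) (by decide)) (v (9,3) (by decide))
  have d40 := recolor_ne (c 4) (c 0) (c 9) (c 5) h (v (4,0) (by decide)) t4 t0
    (v (9,0) (by decide)) (v (5,4) (by decide))
  exact no_odd _ _ _ _ _ h
    (recolor_ne_hub (c 0) (c 5) h t0) (recolor_ne_hub (c 1) (c 6) h t1)
    (recolor_ne_hub (c 2) (c 7) h t2) (recolor_ne_hub (c 3) (c 8) h t3)
    (recolor_ne_hub (c 4) (c 9) h t4) d01 d12 d23 d34 d40

end EqGadget

theorem equality_gadget_exists :
    ∃ (W : Type) (_ : Fintype W) (E : SimpleGraph W) (p q : W),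
      E.CliqueFree 3 ∧ E.Colorable 3 ∧ p ≠ q ∧ ¬ E.Adj p q ∧
      ∀ c : E.Coloring (Fin 3), c p = c q := by
  refine ⟨Fin 11, inferInstance, EqGadget.E, 0, 1, EqGadget.cf, ?_, by decide, by decide, ?_⟩
  · exact ⟨SimpleGraph.Coloring.mk (fun v => ![0,0,1,2,1,2,2,1,2,1,0] v) (fun {a b} hab => by
      revert hab; revert a b; decide)⟩
  · exact EqGadget.key
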